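/- For any finite system of events (A_i)_{i∈[d]} with nonzero probabilities, any graph D on [d] with closed neighbourhoods D_i, and any φ ≥ 0 such that P(⋃_{j∈[i-1]\D_i} A_j | A_i) − P(⋃_{j∈[i-1]\D_i} A_j) ≤ φ for all i ∈ [d], we have P(⋂_{i∈[d]} Ā_i) ≤ ∏_{i∈[d]} P(Ā_i) + φ(1 − ∏_{i∈[d]} P(Ā_i)) + Δ₁, where Δ₁ = Σ_{i∈[d]} P(A_i ∩ ⋃_{j∈[i-1]∩D_i} A_j) ∏_{k∈[d]\[i]} P(Ā_k). -/

import Mathlib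

open MeasureTheory Finset

lemma stmt0_step {Ω : Type*} [MeasurableSpace Ω] (μ : Measure Ω) [IsProbabilityMeasure μ]
    (Ai U V C : Set Ω) (hA : MeasurableSet Ai)
    (hC : MeasurableSet C)
    (hCc : Cᶜ = U ∪ V) (φ : ℝ)
    (hApos : 0 < (μ Ai).toReal)
    (hmix : (μ (U ∩ Ai)).toReal / (μ Ai).toReal - (μ U).toReal ≤ φ) :
    (μ (C ∩ Aiᶜ)).toReal ≤ (μ C).toReal * (μ Aiᶜ).toReal + φ * (μ Ai).toReal
      + (μ (Ai ∩ V)).toReal := by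
  have e1 : (μ (C ∩ Ai)).toReal + (μ (C \ Ai)).toReal = (μ C).toReal := by
    rw [← ENNReal.toReal_add (measure_ne_top _ _) (measure_ne_top _ _),
      measure_inter_add_diff C hA]
  have e2 : (μ (Ai ∩ C)).toReal + (μ (Ai \ C)).toReal = (μ Ai).toReal := by
    rw [← ENNReal.toReal_add (measure_ne_top _ _) (measure_ne_top _ _),
      measure_inter_add_diff Ai hC]
  have sub : Ai \ C ⊆ (U ∩ Ai) ∪ (Ai ∩ V) := by
    intro x hx
    have hx2 : x ∈ Cᶜ := hx.2
    rw [hCc] at hx2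
    rcases hx2 with h | h
    · exact Or.inl ⟨h, hx.1⟩
    · exact Or.inr ⟨hx.1, h⟩
  have e3 : (μ (Ai \ C)).toReal ≤ (μ (U ∩ Ai)).toReal + (μ (Ai ∩ V)).toReal := by
    rw [← ENNReal.toReal_add (measure_ne_top _ _) (measure_ne_top _ _)]
    exact ENNReal.toReal_mono (by finiteness)
      ((measure_mono sub).trans (measure_union_le _ _))
  have e4 : (μ (U ∩ Ai)).toReal ≤ ((μ U).toReal + φ) * (μ Ai).toReal := by
    have := sub_le_iff_le_add.mp hmix
    calc (μ (U ∩ Ai)).toReal = (μ (U ∩ Ai)).toReal / (μ Ai).toReal * (μ Ai).toReal := by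
          field_simp
      _ ≤ ((μ U).toReal + φ) * (μ Ai).toReal := by
          apply mul_le_mul_of_nonneg_right _ hApos.le
          linarith
  have e5 : (μ U).toReal ≤ 1 - (μ C).toReal := by
    have hUc : U ⊆ Cᶜ := hCc ▸ Set.subset_union_left
    have h1 : (μ Cᶜ).toReal = 1 - (μ C).toReal := by
      rw [prob_compl_eq_one_sub hC]
      rw [ENNReal.toReal_sub_of_le prob_le_one (by simp)]
      simp
    rw [← h1]
    exact ENNReal.toReal_mono (measure_ne_top _ _) (measure_mono hUc)
  have e6 : (μ Aiᶜ).toReal = 1 - (μ Ai).toReal := by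
    rw [prob_compl_eq_one_sub hA, ENNReal.toReal_sub_of_le prob_le_one (by simp)]
    simp
  have hCA : (μ (C ∩ Ai)).toReal = (μ (Ai ∩ C)).toReal := by rw [Set.inter_comm]
  have hdiff : C ∩ Aiᶜ = C \ Ai := rfl
  rw [hdiff, e6]
  nlinarith [mul_le_mul_of_nonneg_right e5 hApos.le]

/-- Upper bound for the probability that none of the events occurs. -/
theorem stmt_0 {Ω : Type*} [MeasurableSpace Ω] (μ : Measure Ω) [IsProbabilityMeasure μ]
    (d : ℕ) (A : Fin d → Set Ω) (hmeas : ∀ i, MeasurableSet (A i))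
    (hpos : ∀ i, 0 < (μ (A i)).toReal)
    (D : Fin d → Finset (Fin d)) (hD : ∀ i, i ∉ D i)
    (φ : ℝ) (hφ : 0 ≤ φ)
    (hmix : ∀ i : Fin d,
      (μ ((⋃ j ∈ {j : Fin d | j < i ∧ j ∉ D i}, A j) ∩ A i)).toReal / (μ (A i)).toReal
        - (μ (⋃ j ∈ {j : Fin d | j < i ∧ j ∉ D i}, A j)).toReal ≤ φ) :
    (μ (⋂ i, (A i)ᶜ)).toReal ≤
      (∏ i, (μ (A i)ᶜ).toReal)
      + φ * (1 - ∏ i, (μ (A i)ᶜ).toReal)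
      + ∑ i, (μ (A i ∩ ⋃ j ∈ {j : Fin d | j < i ∧ j ∈ D i}, A j)).toReal *
          ∏ k ∈ Finset.univ.filter (fun k => i < k), (μ (A k)ᶜ).toReal := by
  have key : ∀ n, n ≤ d →
      (μ (⋂ j : Fin d, ⋂ (_ : (j : ℕ) < n), (A j)ᶜ)).toReal ≤
        (∏ j ∈ univ.filter (fun j : Fin d => (j : ℕ) < n), (μ (A j)ᶜ).toReal)
        + φ * (1 - ∏ j ∈ univ.filter (fun j : Fin d => (j : ℕ) < n), (μ (A j)ᶜ).toReal)
        + ∑ i ∈ univ.filter (fun i : Fin d => (i : ℕ) < n),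
            (μ (A i ∩ ⋃ j ∈ {j : Fin d | j < i ∧ j ∈ D i}, A j)).toReal *
              ∏ k ∈ univ.filter (fun k => i < k ∧ (k : ℕ) < n), (μ (A k)ᶜ).toReal := by
    intro n
    induction n with
    | zero => simp
    | succ n ih =>
      intro hnd
      have hn : n < d := hnd
      have ihn := ih hn.le
      set i : Fin d := ⟨n, hn⟩ with hidef
      set Cn : Set Ω := ⋂ j : Fin d, ⋂ (_ : (j : ℕ) < n), (A j)ᶜ with hCn
      set U : Set Ω := ⋃ j ∈ {j : Fin d | j < i ∧ j ∉ D i}, A j with hUdef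
      set V : Set Ω := ⋃ j ∈ {j : Fin d | j < i ∧ j ∈ D i}, A j with hVdef
      have hCmeas : MeasurableSet Cn :=
        MeasurableSet.iInter fun j => MeasurableSet.iInter fun _ => (hmeas j).compl
      have hCsucc : (⋂ j : Fin d, ⋂ (_ : (j : ℕ) < n + 1), (A j)ᶜ) = Cn ∩ (A i)ᶜ := by
        ext x
        simp only [hCn, Set.mem_inter_iff, Set.mem_iInter, Set.mem_compl_iff]
        constructor
        · intro h
          exact ⟨fun j hj => h j (Nat.lt_succ_of_lt hj), h i (Nat.lt_succ_self n)⟩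
        · intro h j hj
          rcases Nat.lt_succ_iff_lt_or_eq.mp hj with h' | h'
          · exact h.1 j h'
          · have : j = i := Fin.ext h'
            rw [this]; exact h.2
      have hCc : Cnᶜ = U ∪ V := by
        ext x
        simp only [hCn, hUdef, hVdef, Set.compl_iInter, Set.mem_iUnion, Set.mem_union,
          Set.mem_compl_iff, Set.mem_setOf_eq, compl_compl]
        constructor
        · rintro ⟨j, hj, hx⟩
          have hji : j < i := by rw [Fin.lt_def]; exact hj
          by_cases hjD : j ∈ D i
          · exact Or.inr ⟨j, ⟨hji, hjD⟩, hx⟩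
          · exact Or.inl ⟨j, ⟨hji, hjD⟩, hx⟩
        · rintro (⟨j, ⟨hji, _⟩, hx⟩ | ⟨j, ⟨hji, _⟩, hx⟩) <;>
            exact ⟨j, Fin.lt_def.mp hji, hx⟩
      have hstep := stmt0_step μ (A i) U V Cn (hmeas i) hCmeas hCc φ (hpos i) (hmix i)
      -- Finset manipulations
      have hins : univ.filter (fun j : Fin d => (j : ℕ) < n + 1)
          = insert i (univ.filter (fun j : Fin d => (j : ℕ) < n)) := by
        ext j
        simp only [mem_filter, mem_univ, true_and, mem_insert, Fin.ext_iff, hidef, Fin.val_mk]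
        omega
      have hiNot : i ∉ univ.filter (fun j : Fin d => (j : ℕ) < n) := by simp [hidef]
      have hPsucc : ∏ j ∈ univ.filter (fun j : Fin d => (j : ℕ) < n + 1), (μ (A j)ᶜ).toReal
          = (μ (A i)ᶜ).toReal * ∏ j ∈ univ.filter (fun j : Fin d => (j : ℕ) < n),
              (μ (A j)ᶜ).toReal := by
        rw [hins, prod_insert hiNot]
      have hprod_i : ∏ k ∈ univ.filter (fun k : Fin d => i < k ∧ (k : ℕ) < n + 1),
          (μ (A k)ᶜ).toReal = 1 := by
        rw [show univ.filter (fun k : Fin d => i < k ∧ (k : ℕ) < n + 1) = (∅ : Finset (Fin d))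
          from by ext k; simp only [mem_filter, mem_univ, true_and, Fin.lt_def, hidef, Fin.val_mk, Finset.notMem_empty, iff_false]; omega]
        simp
      have hprod_lt : ∀ i' ∈ univ.filter (fun j : Fin d => (j : ℕ) < n),
          (μ (A i' ∩ ⋃ j ∈ {j : Fin d | j < i' ∧ j ∈ D i'}, A j)).toReal *
            ∏ k ∈ univ.filter (fun k => i' < k ∧ (k : ℕ) < n + 1), (μ (A k)ᶜ).toReal
          = (μ (A i)ᶜ).toReal * ((μ (A i' ∩ ⋃ j ∈ {j : Fin d | j < i' ∧ j ∈ D i'}, A j)).toReal *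
              ∏ k ∈ univ.filter (fun k => i' < k ∧ (k : ℕ) < n), (μ (A k)ᶜ).toReal) := by
        intro i' hi'
        have hi'n : (i' : ℕ) < n := by simpa using hi'
        have : univ.filter (fun k : Fin d => i' < k ∧ (k : ℕ) < n + 1)
            = insert i (univ.filter (fun k : Fin d => i' < k ∧ (k : ℕ) < n)) := by
          ext k
          simp only [mem_filter, mem_univ, true_and, mem_insert, Fin.lt_def, Fin.ext_iff, hidef, Fin.val_mk]
          omega
        have hino : i ∉ univ.filter (fun k : Fin d => i' < k ∧ (k : ℕ) < n) := by
          simp only [mem_filter, mem_univ, true_and, hidef, Fin.lt_def, Fin.val_mk]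
          omega
        rw [this, prod_insert hino]
        ring
      have hSsucc : ∑ i' ∈ univ.filter (fun i' : Fin d => (i' : ℕ) < n + 1),
          (μ (A i' ∩ ⋃ j ∈ {j : Fin d | j < i' ∧ j ∈ D i'}, A j)).toReal *
            ∏ k ∈ univ.filter (fun k => i' < k ∧ (k : ℕ) < n + 1), (μ (A k)ᶜ).toReal
          = (μ (A i ∩ V)).toReal
            + (μ (A i)ᶜ).toReal * ∑ i' ∈ univ.filter (fun i' : Fin d => (i' : ℕ) < n),
              (μ (A i' ∩ ⋃ j ∈ {j : Fin d | j < i' ∧ j ∈ D i'}, A j)).toReal *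
                ∏ k ∈ univ.filter (fun k => i' < k ∧ (k : ℕ) < n), (μ (A k)ᶜ).toReal := by
        rw [hins, sum_insert hiNot, hprod_i, mul_one, sum_congr rfl hprod_lt, ← mul_sum, hVdef]
      -- numeric facts
      have hq0 : 0 ≤ (μ (A i)ᶜ).toReal := ENNReal.toReal_nonneg
      have hq1 : (μ (A i)ᶜ).toReal ≤ 1 := by
        simpa using ENNReal.toReal_mono (by simp) (prob_le_one (μ := μ) (s := (A i)ᶜ))
      have hqp : (μ (A i)ᶜ).toReal = 1 - (μ (A i)).toReal := by
        rw [prob_compl_eq_one_sub (hmeas i), ENNReal.toReal_sub_of_le prob_le_one (by simp)]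
        simp
      rw [hCsucc, hPsucc, hSsucc]
      have hmul := mul_le_mul_of_nonneg_left ihn hq0
      nlinarith [hmul, hstep]
  have hfin := key d le_rfl
  have h1 : (⋂ j : Fin d, ⋂ (_ : (j : ℕ) < d), (A j)ᶜ) = ⋂ i, (A i)ᶜ := by
    ext x; simp [Fin.isLt]
  have h2 : univ.filter (fun j : Fin d => (j : ℕ) < d) = univ :=
    filter_true_of_mem fun j _ => j.isLt
  have h3 : ∀ i : Fin d, univ.filter (fun k : Fin d => i < k ∧ (k : ℕ) < d)
      = univ.filter (fun k => i < k) := by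
    intro i; ext k; simp [Fin.isLt]
  rw [h1, h2] at hfin
  simp only [h3] at hfin
  exact hfin
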